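/- Every Grand Motzkin path that attains minimum level -k with k ≥ 1 decomposes uniquely as A·B·C, where A is a nonnegative-from-below path from level 0 to level -k touching -k only at its end (i.e., a reversed elevated Motzkin-type prefix ending with a down-step), B is a Motzkin path translated to level -k, and C starts with an up-step from -k and stays strictly above -k after leaving, ending at level 0; consequently the generating function of Grand Motzkin paths with minimum exactly -k is z^{2k} M(z)^{2k+1}. -/

import Mathlib

open PowerSeries

namespace GM

/-- partial sum of first `m` steps -/
def pre (l : List ℤ) (m : ℕ) : ℤ := (l.take m).sum

def Steps (l : List ℤ) : Prop := ∀ x ∈ l, x = -1 ∨ x = 0 ∨ x = 1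

def Mot (l : List ℤ) : Prop := Steps l ∧ l.sum = 0 ∧ ∀ m, 0 ≤ pre l m

def GE (k : ℕ) (l : List ℤ) : Prop :=
  Steps l ∧ l.sum = 0 ∧ (∀ m, -(k:ℤ) ≤ pre l m) ∧ ∃ m, pre l m = -(k:ℤ)

@[simp] lemma pre_zero (l : List ℤ) : pre l 0 = 0 := rfl

@[simp] lemma pre_nil (m : ℕ) : pre [] m = 0 := by simp [pre]

lemma pre_of_le (l : List ℤ) {m : ℕ} (h : l.length ≤ m) : pre l m = l.sum := by
  simp [pre, List.take_of_length_le h]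

lemma pre_append (A B : List ℤ) (m : ℕ) :
    pre (A ++ B) m = pre A m + pre B (m - A.length) := by
  simp [pre, List.take_append]

lemma pre_cons (a : ℤ) (l : List ℤ) (m : ℕ) : pre (a :: l) (m + 1) = a + pre l m := by
  simp [pre, List.take_succ_cons]

lemma pre_succ (l : List ℤ) (m : ℕ) : pre l (m + 1) = pre l m + (l.getD m 0) := by
  rcases lt_or_ge m l.length with h | h
  · rw [pre, pre, List.take_succ, List.sum_append, List.getElem?_eq_getElem h]
    simp [List.getD, List.getElem?_eq_getElem h]
  · rw [pre_of_le l h, pre_of_le l (le_trans h (Nat.le_succ _)),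
      List.getD_eq_default _ _ h, add_zero]

lemma step_mem {l : List ℤ} {m : ℕ} (h : m < l.length) : l.getD m 0 ∈ l := by
  rw [List.getD_eq_getElem _ _ h]; exact List.getElem_mem _

lemma pre_succ_le (hs : Steps l) (m : ℕ) : pre l (m + 1) ≤ pre l m + 1 := by
  rw [pre_succ]
  rcases lt_or_ge m l.length with h | h
  · rcases hs _ (step_mem h) with h' | h' | h' <;> rw [h'] <;> omega
  · rw [List.getD_eq_default _ _ h]; omega

lemma pre_succ_ge {l : List ℤ} (hs : Steps l) (m : ℕ) : pre l m - 1 ≤ pre l (m + 1) := by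
  rw [pre_succ]
  rcases lt_or_ge m l.length with h | h
  · rcases hs _ (step_mem h) with h' | h' | h' <;> rw [h'] <;> omega
  · rw [List.getD_eq_default _ _ h]; omega



noncomputable def gf (α : Type) (sz : α → ℕ) : PowerSeries ℚ :=
  mk fun n => (Nat.card {a : α // sz a = n} : ℚ)

@[simp] lemma coeff_gf (α : Type) (sz : α → ℕ) (n : ℕ) :
    coeff n (gf α sz) = (Nat.card {a : α // sz a = n} : ℚ) := coeff_mk _ _

lemma gf_congr {α β : Type} (e : α ≃ β) (sza : α → ℕ) (szb : β → ℕ)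
    (h : ∀ a, sza a = szb (e a)) : gf α sza = gf β szb := by
  ext n
  rw [coeff_gf, coeff_gf]
  exact_mod_cast congrArg Nat.cast
    (Nat.card_congr (e.subtypeEquiv (q := fun b => szb b = n) (fun a => by rw [h a])))

lemma gf_sum {α β : Type} (sza : α → ℕ) (szb : β → ℕ)
    (ha : ∀ n, Finite {a : α // sza a = n}) (hb : ∀ n, Finite {b : β // szb b = n}) :
    gf (α ⊕ β) (Sum.elim sza szb) = gf α sza + gf β szb := by
  ext n
  rw [map_add, coeff_gf, coeff_gf, coeff_gf]
  rw [Nat.card_congr (Equiv.subtypeSum (p := fun x => Sum.elim sza szb x = n))]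
  haveI : Finite {a : α // Sum.elim sza szb (Sum.inl a) = n} := ha n
  haveI : Finite {b : β // Sum.elim sza szb (Sum.inr b) = n} := hb n
  rw [Nat.card_sum]
  push_cast
  rfl

/-- fiber of a product decomposes as a sigma -/
def prodFiberEquiv {α β : Type} (sza : α → ℕ) (szb : β → ℕ) (n : ℕ) :
    {p : α × β // sza p.1 + szb p.2 = n} ≃
      Σ i : Fin (n + 1), {a : α // sza a = (i : ℕ)} × {b : β // szb b = n - (i : ℕ)} where
  toFun p := ⟨⟨sza p.1.1, by have := p.2; omega⟩, ⟨p.1.1, rfl⟩, ⟨p.1.2, by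
    show szb p.1.2 = n - sza p.1.1; have := p.2; omega⟩⟩
  invFun x := ⟨(x.2.1.1, x.2.2.1), by
    show sza x.2.1.1 + szb x.2.2.1 = n
    have h1 := x.2.1.2; have h2 := x.2.2.2; have h3 : (x.1 : ℕ) < n + 1 := x.1.isLt; omega⟩
  left_inv p := rfl
  right_inv x := by
    rcases x with ⟨⟨i, hi⟩, ⟨a, ha⟩, ⟨b, hb⟩⟩
    rw [Fin.val_mk] at ha hb
    subst ha
    rfl

lemma gf_prod {α β : Type} (sza : α → ℕ) (szb : β → ℕ)
    (ha : ∀ n, Finite {a : α // sza a = n}) (hb : ∀ n, Finite {b : β // szb b = n}) :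
    gf (α × β) (fun p => sza p.1 + szb p.2) = gf α sza * gf β szb := by
  ext n
  rw [coeff_mul, coeff_gf]
  rw [Nat.card_congr (prodFiberEquiv sza szb n)]
  haveI : ∀ i : Fin (n+1), Fintype ({a : α // sza a = (i:ℕ)} × {b : β // szb b = n - (i:ℕ)}) :=
    fun i => by haveI := ha (i:ℕ); haveI := hb (n - (i:ℕ)); exact Fintype.ofFinite _
  have key : Nat.card (Σ i : Fin (n+1), {a : α // sza a = (i:ℕ)} × {b : β // szb b = n - (i:ℕ)})
      = ∑ i : Fin (n+1), Nat.card ({a : α // sza a = (i:ℕ)} × {b : β // szb b = n - (i:ℕ)}) := by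
    rw [Nat.card_eq_fintype_card, Fintype.card_sigma]
    exact Finset.sum_congr rfl fun i _ => (Nat.card_eq_fintype_card).symm
  rw [key]
  push_cast
  rw [Finset.Nat.sum_antidiagonal_eq_sum_range_succ_mk, ← Fin.sum_univ_eq_sum_range]
  congr 1; funext i
  rw [Nat.card_prod]
  push_cast
  rw [coeff_gf, coeff_gf]

lemma gf_shift {α : Type} (sz : α → ℕ) (c : ℕ) :
    gf α (fun a => sz a + c) = X ^ c * gf α sz := by
  ext n
  rw [coeff_gf]
  rcases le_or_gt c n with h | h
  · obtain ⟨d, rfl⟩ : ∃ d, n = d + c := ⟨n - c, by omega⟩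
    rw [coeff_X_pow_mul, coeff_gf]
    exact_mod_cast congrArg Nat.cast (Nat.card_congr (Equiv.subtypeEquivRight
      (p := fun a => (fun a => sz a + c) a = d + c) (q := fun a => sz a = d) (fun a => by
        show sz a + c = d + c ↔ sz a = d; omega)))
  · have : IsEmpty {a : α // sz a + c = n} := ⟨fun a => absurd a.2 (by omega)⟩
    rw [Nat.card_of_isEmpty, coeff_mul]
    rw [Finset.sum_eq_zero]
    · simp
    intro p hp
    rw [Finset.HasAntidiagonal.mem_antidiagonal] at hp
    rw [coeff_X_pow, if_neg (by omega), zero_mul]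

lemma gf_punit : gf PUnit (fun _ => 0) = 1 := by
  ext n
  rw [coeff_gf, coeff_one]
  rcases Nat.eq_zero_or_pos n with rfl | h
  · rw [if_pos rfl]
    haveI : Fintype {a : PUnit // (fun _ => (0:ℕ)) a = 0} := Fintype.ofFinite _
    rw [Nat.card_eq_fintype_card]
    simp
  · rw [if_neg (by omega)]
    haveI : IsEmpty {a : PUnit // (fun _ => (0:ℕ)) a = n} := ⟨fun a => by have := a.2; simp at this; omega⟩
    rw [Nat.card_of_isEmpty]
    simp



variable {l : List ℤ}

lemma steps_sublist {l l' : List ℤ} (hs : Steps l) (h : List.Sublist l' l) : Steps l' :=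
  fun x hx => hs x (h.subset hx)

lemma pre_take (l : List ℤ) (j m : ℕ) : pre (l.take j) m = pre l (min m j) := by
  simp [pre, List.take_take]

lemma sum_take (l : List ℤ) (j : ℕ) : (l.take j).sum = pre l j := rfl

lemma pre_drop (l : List ℤ) (j m : ℕ) : pre (l.drop j) m = pre l (j + m) - pre l j := by
  rcases le_or_gt j l.length with h | h
  · have h2 := pre_append (l.take j) (l.drop j) (j + m)
    rw [List.take_append_drop, pre_take, List.length_take, min_eq_left h,
      min_eq_right (Nat.le_add_right j m), Nat.add_sub_cancel_left] at h2
    omega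
  · rw [List.drop_eq_nil_of_le (le_of_lt h), pre_nil,
      pre_of_le l (by omega), pre_of_le l (le_of_lt h)]
    ring

lemma sum_drop (l : List ℤ) (j : ℕ) : (l.drop j).sum = l.sum - pre l j := by
  have := congrArg List.sum (List.take_append_drop j l)
  rw [List.sum_append] at this
  rw [← this, sum_take]; ring

lemma mot_nil : Mot ([] : List ℤ) :=
  ⟨fun x hx => absurd hx List.not_mem_nil, rfl, fun m => le_of_eq (pre_nil m).symm⟩

lemma mot_cons_zero {t : List ℤ} (ht : Mot t) : Mot ((0:ℤ) :: t) := by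
  refine ⟨fun x hx => ?_, by simp [ht.2.1], fun m => ?_⟩
  · rcases List.mem_cons.1 hx with rfl | hx
    · right; left; rfl
    · exact ht.1 x hx
  · cases m with
    | zero => simp
    | succ m => rw [pre_cons]; simpa using ht.2.2 m

lemma pre_one_cons_nonneg {Q : List ℤ} (hQ : ∀ m, 0 ≤ pre Q m) (i : ℕ) :
    0 ≤ pre ((1:ℤ) :: Q) i := by
  cases i with
  | zero => simp
  | succ i => rw [pre_cons]; have := hQ i; omega

lemma mot_up_down {A B : List ℤ} (hA : Mot A) (hB : Mot B) :
    Mot ((1:ℤ) :: (A ++ (-1:ℤ) :: B)) := by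
  refine ⟨fun x hx => ?_, ?_, fun m => ?_⟩
  · rcases List.mem_cons.1 hx with rfl | hx
    · right; right; rfl
    · rcases List.mem_append.1 hx with hx | hx
      · exact hA.1 x hx
      · rcases List.mem_cons.1 hx with rfl | hx
        · left; rfl
        · exact hB.1 x hx
  · simp [hA.2.1, hB.2.1]
  · cases m with
    | zero => simp
    | succ m =>
      rw [pre_cons, pre_append]
      have hAm := hA.2.2 m
      rcases le_or_gt m A.length with h | h
      · rw [Nat.sub_eq_zero_of_le h, pre_zero]; omega
      · obtain ⟨j, hj⟩ : ∃ j, m - A.length = j + 1 := ⟨m - A.length - 1, by omega⟩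
        rw [hj, pre_cons]
        have hBj := hB.2.2 j
        omega

/-- uniqueness of splitting at the first `-1` below a nonnegative prefix -/
lemma split_neg_unique {A₁ B₁ A₂ B₂ : List ℤ}
    (h1 : ∀ m, 0 ≤ pre A₁ m) (h1s : A₁.sum = 0)
    (h2 : ∀ m, 0 ≤ pre A₂ m) (h2s : A₂.sum = 0)
    (h : A₁ ++ (-1:ℤ) :: B₁ = A₂ ++ (-1:ℤ) :: B₂) : A₁ = A₂ ∧ B₁ = B₂ := by
  have key : ∀ (C₁ D₁ C₂ D₂ : List ℤ), (∀ m, 0 ≤ pre C₁ m) → C₁.sum = 0 →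
      (∀ m, 0 ≤ pre C₂ m) →
      C₁ ++ (-1:ℤ) :: D₁ = C₂ ++ (-1:ℤ) :: D₂ → C₁.length < C₂.length → False := by
    intro C₁ D₁ C₂ D₂ hc1 hc1s hc2 heq hlt
    have e1 : pre (C₁ ++ (-1:ℤ) :: D₁) (C₁.length + 1) = -1 := by
      rw [pre_append, pre_of_le _ (by omega), hc1s, Nat.add_sub_cancel_left]
      show (0:ℤ) + pre ((-1:ℤ) :: D₁) (0 + 1) = -1
      rw [pre_cons]; simp
    have e2 : 0 ≤ pre (C₂ ++ (-1:ℤ) :: D₂) (C₁.length + 1) := by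
      rw [pre_append, Nat.sub_eq_zero_of_le (by omega), pre_zero]
      have := hc2 (C₁.length + 1); omega
    rw [heq] at e1
    omega
  have hlen : A₁.length = A₂.length := by
    rcases Nat.lt_trichotomy A₁.length A₂.length with hl | hl | hl
    · exact absurd (key A₁ B₁ A₂ B₂ h1 h1s h2 h hl) (fun x => x)
    · exact hl
    · exact absurd (key A₂ B₂ A₁ B₁ h2 h2s h1 h.symm hl) (fun x => x)
  obtain ⟨hA, hB⟩ := List.append_inj h hlen
  exact ⟨hA, by injection hB⟩

/-- uniqueness of splitting at the last `+1` before a nonnegative suffix -/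
lemma split_pos_unique {T₁ Q₁ T₂ Q₂ : List ℤ}
    (hT1 : T₁.sum = 0) (hT2 : T₂.sum = 0)
    (hQ1 : ∀ m, 0 ≤ pre Q₁ m) (hQ2 : ∀ m, 0 ≤ pre Q₂ m)
    (h : T₁ ++ (1:ℤ) :: Q₁ = T₂ ++ (1:ℤ) :: Q₂) : T₁ = T₂ ∧ Q₁ = Q₂ := by
  have key : ∀ (C₁ D₁ C₂ D₂ : List ℤ), C₁.sum = 0 → C₂.sum = 0 →
      (∀ m, 0 ≤ pre D₁ m) →
      C₁ ++ (1:ℤ) :: D₁ = C₂ ++ (1:ℤ) :: D₂ → C₁.length < C₂.length → False := by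
    intro C₁ D₁ C₂ D₂ hc1 hc2 hd1 heq hlt
    have e1 : 1 ≤ pre (C₁ ++ (1:ℤ) :: D₁) C₂.length := by
      rw [pre_append, pre_of_le _ (by omega), hc1]
      obtain ⟨j, hj⟩ : ∃ j, C₂.length - C₁.length = j + 1 := ⟨C₂.length - C₁.length - 1, by omega⟩
      rw [hj, pre_cons]
      have := hd1 j; omega
    have e2 : pre (C₂ ++ (1:ℤ) :: D₂) C₂.length = 0 := by
      rw [pre_append, Nat.sub_self, pre_zero, pre_of_le _ le_rfl, hc2]; ring
    rw [heq, e2] at e1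
    omega
  have hlen : T₁.length = T₂.length := by
    rcases Nat.lt_trichotomy T₁.length T₂.length with hl | hl | hl
    · exact absurd (key T₁ Q₁ T₂ Q₂ hT1 hT2 hQ1 h hl) (fun x => x)
    · exact hl
    · exact absurd (key T₂ Q₂ T₁ Q₁ hT2 hT1 hQ2 h.symm hl) (fun x => x)
  obtain ⟨hT, hQ⟩ := List.append_inj h hlen
  exact ⟨hT, by injection hQ⟩


lemma finite_steps (n : ℕ) : {l : List ℤ | Steps l ∧ l.length = n}.Finite := by
  induction n with
  | zero =>
    apply Set.Finite.subset (Set.finite_singleton ([] : List ℤ))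
    rintro l ⟨-, hl⟩
    rw [List.length_eq_zero_iff] at hl
    simp [hl]
  | succ n ih =>
    have hfin : ({-1, 0, 1} : Set ℤ).Finite := Set.toFinite _
    apply Set.Finite.subset (Set.Finite.image2 List.cons hfin ih)
    rintro l ⟨hs, hl⟩
    cases l with
    | nil => simp at hl
    | cons a t =>
      refine ⟨a, ?_, t, ⟨fun x hx => hs x (List.mem_cons_of_mem a hx), by simpa using hl⟩, rfl⟩
      rcases hs a (List.mem_cons_self) with h | h | h <;> simp [h]

lemma fib_finite {P : List ℤ → Prop} (hP : ∀ l, P l → Steps l) (n : ℕ) :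
    Finite {a : {l : List ℤ // P l} // a.1.length = n} := by
  have h : {l : List ℤ | P l ∧ l.length = n}.Finite :=
    (finite_steps n).subset (fun l hl => ⟨hP l hl.1, hl.2⟩)
  haveI : Finite {x : List ℤ // P x ∧ x.length = n} := h.to_subtype
  exact Finite.of_equiv _ (Equiv.subtypeSubtypeEquivSubtypeInter P (fun l => l.length = n)).symm

lemma finite_shift {α : Type} {sz : α → ℕ} (h : ∀ m, Finite {a : α // sz a = m}) (c n : ℕ) :
    Finite {a : α // sz a + c = n} := by
  haveI := h (n - c)
  apply Finite.of_injective (fun x : {a : α // sz a + c = n} =>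
    (⟨x.1, by have := x.2; omega⟩ : {a : α // sz a = n - c}))
  intro x y hxy
  exact Subtype.ext (by simpa using congrArg Subtype.val hxy)

lemma finite_prod_fiber {α β : Type} {sz1 : α → ℕ} {sz2 : β → ℕ}
    (ha : ∀ m, Finite {a : α // sz1 a = m}) (hb : ∀ m, Finite {b : β // sz2 b = m}) (n : ℕ) :
    Finite {p : α × β // sz1 p.1 + sz2 p.2 = n} := by
  haveI : ∀ i : Fin (n+1), Finite ({a : α // sz1 a = (i:ℕ)} × {b : β // sz2 b = n - (i:ℕ)}) :=
    fun i => by haveI := ha (i:ℕ); haveI := hb (n - (i:ℕ)); infer_instance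
  exact Finite.of_equiv _ (prodFiberEquiv sz1 sz2 n).symm

/-- First-return decomposition for the tail of a Motzkin path starting with an up step. -/
lemma first_return {t : List ℤ} (hs : Steps t) (hsum : (1:ℤ) + t.sum = 0)
    (hpre : ∀ m, 0 ≤ 1 + pre t m) :
    ∃ A B, Mot A ∧ Mot B ∧ t = A ++ (-1:ℤ) :: B := by
  classical
  have hex : ∃ m, 1 + pre t m ≤ 0 := ⟨t.length, by rw [pre_of_le t le_rfl]; omega⟩
  set u := Nat.find hex with hu
  have hu0 : 1 + pre t u ≤ 0 := Nat.find_spec hex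
  have humin : ∀ m < u, 0 < 1 + pre t m := by
    intro m hm
    have := Nat.find_min hex hm
    omega
  have hupre : pre t u = -1 := by have := hpre u; omega
  have hu1 : 1 ≤ u := by
    rcases Nat.eq_zero_or_pos u with h | h
    · rw [h] at hupre; simp at hupre
    · exact h
  have hprev : 0 ≤ pre t (u - 1) := by have := humin (u-1) (by omega); omega
  have hulen : u - 1 < t.length := by
    by_contra hc
    push_neg at hc
    rw [pre_of_le t hc] at hprev
    omega
  have hstep : pre t u = pre t (u-1) + t.getD (u-1) 0 := by
    have := pre_succ t (u-1)
    rw [show u - 1 + 1 = u by omega] at this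
    exact this
  have hstepmem := hs _ (step_mem hulen)
  have hprev0 : pre t (u-1) = 0 ∧ t.getD (u-1) 0 = -1 := by
    rcases hstepmem with h | h | h <;> rw [h] at hstep <;> omega
  refine ⟨t.take (u-1), t.drop u, ⟨steps_sublist hs (List.take_sublist _ _), ?_, ?_⟩,
    ⟨steps_sublist hs (List.drop_sublist _ _), ?_, ?_⟩, ?_⟩
  · rw [sum_take]; exact hprev0.1
  · intro m
    rw [pre_take]
    rcases le_or_gt m (u-1) with h | h
    · rw [min_eq_left h]
      rcases Nat.eq_zero_or_pos u with h0 | h0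
      · omega
      · rcases eq_or_lt_of_le h with rfl | h'
        · omega
        · have := humin m (by omega); omega
    · rw [min_eq_right (le_of_lt h)]; omega
  · rw [sum_drop, hupre]; omega
  · intro m
    rw [pre_drop, hupre]
    have := hpre (u + m)
    omega
  · conv_lhs => rw [← List.take_append_drop (u-1) t]
    congr 1
    rw [List.drop_eq_getElem_cons hulen]
    congr 1
    · have := hprev0.2
      rwa [List.getD_eq_getElem _ _ hulen] at this
    · congr 1; omega

lemma finite_sum_fiber {α β : Type} {sza : α → ℕ} {szb : β → ℕ}
    (ha : ∀ m, Finite {a : α // sza a = m}) (hb : ∀ m, Finite {b : β // szb b = m}) (n : ℕ) :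
    Finite {x : α ⊕ β // Sum.elim sza szb x = n} := by
  haveI : Finite {a : α // Sum.elim sza szb (Sum.inl a) = n} := ha n
  haveI : Finite {b : β // Sum.elim sza szb (Sum.inr b) = n} := hb n
  exact Finite.of_equiv _ (Equiv.subtypeSum (p := fun x => Sum.elim sza szb x = n)).symm

def motΨ : (PUnit ⊕ ({l : List ℤ // Mot l} ⊕ ({l : List ℤ // Mot l} × {l : List ℤ // Mot l})))
    → {l : List ℤ // Mot l}
  | .inl _ => ⟨[], mot_nil⟩
  | .inr (.inl t) => ⟨(0:ℤ) :: t.1, mot_cons_zero t.2⟩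
  | .inr (.inr p) => ⟨(1:ℤ) :: (p.1.1 ++ (-1:ℤ) :: p.2.1), mot_up_down p.1.2 p.2.2⟩

lemma motΨ_bij : Function.Bijective motΨ := by
  constructor
  · rintro (⟨⟩ | (t₁ | ⟨A₁, B₁⟩)) (⟨⟩ | (t₂ | ⟨A₂, B₂⟩)) h <;>
      simp only [motΨ, Subtype.mk.injEq] at h
    · rfl
    · exact absurd h (by simp)
    · exact absurd h (by simp)
    · exact absurd h (by simp)
    · rw [List.cons.injEq] at h
      rw [Subtype.ext h.2]
    · rw [List.cons.injEq] at h
      exact absurd h.1 (by norm_num)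
    · exact absurd h (by simp)
    · rw [List.cons.injEq] at h
      exact absurd h.1 (by norm_num)
    · rw [List.cons.injEq] at h
      obtain ⟨hA, hB⟩ := split_neg_unique A₁.2.2.2 A₁.2.2.1 A₂.2.2.2 A₂.2.2.1 h.2
      have : (A₁, B₁) = (A₂, B₂) := by
        rw [Prod.ext_iff]
        exact ⟨Subtype.ext hA, Subtype.ext hB⟩
      rw [this]
  · rintro ⟨l, hl⟩
    match l with
    | [] => exact ⟨.inl ⟨⟩, rfl⟩
    | a :: t =>
      have ha := hl.1 a (List.mem_cons_self)
      have h1 : 0 ≤ a := by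
        have := hl.2.2 (0 + 1)
        rw [pre_cons, pre_zero, add_zero] at this
        exact this
      have hts : Steps t := fun x hx => hl.1 x (List.mem_cons_of_mem a hx)
      have hsum : a + t.sum = 0 := by have := hl.2.1; rwa [List.sum_cons] at this
      have hpre : ∀ m, 0 ≤ a + pre t m := by
        intro m
        have := hl.2.2 (m + 1)
        rwa [pre_cons] at this
      rcases ha with rfl | rfl | rfl
      · omega
      · refine ⟨.inr (.inl ⟨t, hts, by omega, fun m => by have := hpre m; omega⟩), rfl⟩
      · obtain ⟨A, B, hA, hB, hAB⟩ := first_return hts (by omega) hpre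
        exact ⟨.inr (.inr (⟨A, hA⟩, ⟨B, hB⟩)), Subtype.ext (by simp [motΨ, hAB])⟩

lemma mot_fib_finite (n : ℕ) : Finite {a : {l : List ℤ // Mot l} // a.1.length = n} :=
  fib_finite (fun l hl => hl.1) n

noncomputable def gfM : PowerSeries ℚ := gf {l : List ℤ // Mot l} (fun a => a.1.length)

lemma gfM_def : gfM = gf {l : List ℤ // Mot l} (fun a => a.1.length) := rfl

lemma gfM_eq : gfM = 1 + X * gfM + X ^ 2 * gfM ^ 2 := by
  have hcongr := gf_congr (Equiv.ofBijective motΨ motΨ_bij)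
    (Sum.elim (fun _ => (0:ℕ)) (Sum.elim (fun t => t.1.length + 1)
      (fun p => (p.1.1.length + p.2.1.length) + 2)))
    (fun a => a.1.length)
    (by
      rintro (⟨⟩ | (t | ⟨A, B⟩)) <;>
        simp [motΨ, Equiv.ofBijective] <;> omega)
  conv_lhs => rw [gfM_def, ← hcongr]
  rw [gf_sum _ _ (fun n => Subtype.finite) (finite_sum_fiber (finite_shift mot_fib_finite 1)
    (finite_shift (finite_prod_fiber mot_fib_finite mot_fib_finite) 2))]
  rw [gf_sum _ _ (finite_shift mot_fib_finite 1)
    (finite_shift (finite_prod_fiber mot_fib_finite mot_fib_finite) 2)]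
  rw [gf_punit, gf_shift (fun t : {l : List ℤ // Mot l} => t.1.length) 1,
    gf_shift (fun p : {l : List ℤ // Mot l} × {l : List ℤ // Mot l} =>
      p.1.1.length + p.2.1.length) 2,
    gf_prod _ _ mot_fib_finite mot_fib_finite, ← gfM_def]
  ring

lemma sol_unique {F G : PowerSeries ℚ} (hF : F = 1 + X * F + X ^ 2 * F ^ 2)
    (hG : G = 1 + X * G + X ^ 2 * G ^ 2) : F = G := by
  have hF' : F - (X * F + X ^ 2 * F ^ 2) = 1 := by nth_rewrite 1 [hF]; ring
  have hG' : G - (X * G + X ^ 2 * G ^ 2) = 1 := by nth_rewrite 1 [hG]; ring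
  have key : (F - G) * (1 - X - X ^ 2 * (F + G)) = 0 := by
    have e : (F - G) * (1 - X - X ^ 2 * (F + G)) =
        (F - (X * F + X ^ 2 * F ^ 2)) - (G - (X * G + X ^ 2 * G ^ 2)) := by ring
    rw [e, hF', hG', sub_self]
  rcases mul_eq_zero.mp key with h | h
  · exact sub_eq_zero.mp h
  · exfalso
    have := congrArg (constantCoeff) h
    simp at this

lemma ge_zero_iff (l : List ℤ) : GE 0 l ↔ Mot l := by
  constructor
  · rintro ⟨h1, h2, h3, -⟩
    exact ⟨h1, h2, fun m => by have := h3 m; simpa using this⟩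
  · rintro ⟨h1, h2, h3⟩
    exact ⟨h1, h2, fun m => by simpa using h3 m, ⟨0, by simp⟩⟩

lemma ge_glue {k : ℕ} {P T Q : List ℤ} (hP : Mot P) (hT : GE k T) (hQ : Mot Q) :
    GE (k+1) (P ++ (-1:ℤ) :: (T ++ (1:ℤ) :: Q)) := by
  refine ⟨fun x hx => ?_, ?_, fun m => ?_, ?_⟩
  · rcases List.mem_append.1 hx with hx | hx
    · exact hP.1 x hx
    · rcases List.mem_cons.1 hx with rfl | hx
      · left; rfl
      · rcases List.mem_append.1 hx with hx | hx
        · exact hT.1 x hx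
        · rcases List.mem_cons.1 hx with rfl | hx
          · right; right; rfl
          · exact hQ.1 x hx
  · simp [hP.2.1, hT.2.1, hQ.2.1]
  · rw [pre_append]
    have hPm := hP.2.2 m
    rcases Nat.eq_zero_or_pos (m - P.length) with h0 | h0
    · rw [h0, pre_zero]
      push_cast; omega
    · obtain ⟨j, hj⟩ : ∃ j, m - P.length = j + 1 := ⟨m - P.length - 1, by omega⟩
      rw [hj, pre_cons, pre_append]
      have hTj := hT.2.2.1 j
      have hQ1 := pre_one_cons_nonneg hQ.2.2 (j - T.length)
      push_cast at *
      omega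
  · obtain ⟨m₀, hm₀⟩ := hT.2.2.2
    have hm₁ : pre T (min m₀ T.length) = -(k:ℤ) := by
      rcases le_or_gt m₀ T.length with h | h
      · rwa [min_eq_left h]
      · rw [min_eq_right (le_of_lt h), pre_of_le T le_rfl, hT.2.1]
        rw [pre_of_le T (le_of_lt h), hT.2.1] at hm₀
        exact hm₀
    refine ⟨P.length + (1 + min m₀ T.length), ?_⟩
    rw [pre_append, pre_of_le P (by omega), hP.2.1, Nat.add_sub_cancel_left,
      show 1 + min m₀ T.length = min m₀ T.length + 1 by omega, pre_cons, pre_append,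
      Nat.sub_eq_zero_of_le (min_le_right _ _), pre_zero, hm₁]
    push_cast
    ring

def geΨ (k : ℕ) : ({l : List ℤ // Mot l} × {l : List ℤ // GE k l} × {l : List ℤ // Mot l})
    → {l : List ℤ // GE (k+1) l} := fun p =>
  ⟨p.1.1 ++ (-1:ℤ) :: (p.2.1.1 ++ (1:ℤ) :: p.2.2.1), ge_glue p.1.2 p.2.1.2 p.2.2.2⟩

lemma geΨ_bij (k : ℕ) : Function.Bijective (geΨ k) := by
  constructor
  · rintro ⟨P₁, T₁, Q₁⟩ ⟨P₂, T₂, Q₂⟩ h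
    simp only [geΨ, Subtype.mk.injEq] at h
    obtain ⟨hP, hrest⟩ := split_neg_unique P₁.2.2.2 P₁.2.2.1 P₂.2.2.2 P₂.2.2.1 h
    obtain ⟨hT, hQ⟩ := split_pos_unique T₁.2.2.1 T₂.2.2.1 Q₁.2.2.2 Q₂.2.2.2 hrest
    have : ((P₁, T₁, Q₁) : {l : List ℤ // Mot l} × {l : List ℤ // GE k l} × {l : List ℤ // Mot l})
        = (P₂, T₂, Q₂) := by
      rw [Prod.ext_iff, Prod.ext_iff]
      exact ⟨Subtype.ext hP, Subtype.ext hT, Subtype.ext hQ⟩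
    rw [this]
  · rintro ⟨l, hl⟩
    classical
    have hex : ∃ m, pre l m ≤ -1 := by
      obtain ⟨m₀, hm₀⟩ := hl.2.2.2
      exact ⟨m₀, by rw [hm₀]; push_cast; omega⟩
    set t := Nat.find hex with htdef
    have ht : pre l t ≤ -1 := Nat.find_spec hex
    have htmin : ∀ m < t, 0 ≤ pre l m := by
      intro m hm
      have := Nat.find_min hex hm
      omega
    have ht1 : 1 ≤ t := by
      rcases Nat.eq_zero_or_pos t with h | h
      · rw [h, pre_zero] at ht; omega
      · exact h
    have hprev : 0 ≤ pre l (t-1) := htmin (t-1) (by omega)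
    have htlen : t - 1 < l.length := by
      by_contra hc
      push_neg at hc
      rw [pre_of_le l (by omega), hl.2.1] at ht
      omega
    have hstep : pre l t = pre l (t-1) + l.getD (t-1) 0 := by
      have := pre_succ l (t-1)
      rwa [show t - 1 + 1 = t by omega] at this
    have hmem := hl.1 _ (step_mem htlen)
    have hkey : pre l (t-1) = 0 ∧ l.getD (t-1) 0 = -1 ∧ pre l t = -1 := by
      rcases hmem with h | h | h <;> rw [h] at hstep <;> omega
    set rest := l.drop t with hrestdef
    have hsplit : l = l.take (t-1) ++ (-1:ℤ) :: rest := by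
      conv_lhs => rw [← List.take_append_drop (t-1) l]
      congr 1
      rw [List.drop_eq_getElem_cons htlen]
      congr 1
      · have := hkey.2.1
        rwa [List.getD_eq_getElem _ _ htlen] at this
      · rw [hrestdef]; congr 1; omega
    have hPmot : Mot (l.take (t-1)) := by
      refine ⟨steps_sublist hl.1 (List.take_sublist _ _), by rw [sum_take]; exact hkey.1, ?_⟩
      intro m
      rw [pre_take]
      exact htmin _ (by omega)
    have hrsum : rest.sum = 1 := by
      rw [hrestdef, sum_drop, hl.2.1, hkey.2.2]; ring
    have hrpre : ∀ m, pre rest m = pre l (t + m) + 1 := by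
      intro m
      rw [hrestdef, pre_drop, hkey.2.2]; ring
    have hrsteps : Steps rest := steps_sublist hl.1 (List.drop_sublist _ _)
    set u := Nat.findGreatest (fun m => pre rest m ≤ 0) rest.length with hudef
    have hu_le : u ≤ rest.length := Nat.findGreatest_le _
    have hu_spec : pre rest u ≤ 0 := by
      rw [hudef]
      exact Nat.findGreatest_spec (P := fun m => pre rest m ≤ 0) (Nat.zero_le _)
        (by show pre rest 0 ≤ 0; rw [pre_zero])
    have hu_max : ∀ m, u < m → m ≤ rest.length → 1 ≤ pre rest m := by
      intro m h1 h2
      have := Nat.findGreatest_is_greatest h1 h2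
      omega
    have hu_lt : u < rest.length := by
      rcases eq_or_lt_of_le hu_le with h | h
      · rw [h, pre_of_le rest le_rfl, hrsum] at hu_spec; omega
      · exact h
    have hstep2 : pre rest (u+1) = pre rest u + rest.getD u 0 := pre_succ rest u
    have hu1 : 1 ≤ pre rest (u+1) := hu_max (u+1) (by omega) (by omega)
    have hmem2 := hrsteps _ (step_mem hu_lt)
    have hkey2 : pre rest u = 0 ∧ rest.getD u 0 = 1 ∧ pre rest (u+1) = 1 := by
      rcases hmem2 with h | h | h <;> rw [h] at hstep2 <;> omega
    have hsplit2 : rest = rest.take u ++ (1:ℤ) :: rest.drop (u+1) := by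
      conv_lhs => rw [← List.take_append_drop u rest]
      congr 1
      rw [List.drop_eq_getElem_cons hu_lt]
      congr 1
      have := hkey2.2.1
      rwa [List.getD_eq_getElem _ _ hu_lt] at this
    have hTge : GE k (rest.take u) := by
      refine ⟨steps_sublist hrsteps (List.take_sublist _ _),
        by rw [sum_take]; exact hkey2.1, fun m => ?_, ?_⟩
      · rw [pre_take, hrpre]
        have := hl.2.2.1 (t + min m u)
        push_cast at *
        omega
      · obtain ⟨m₀, hm₀⟩ := hl.2.2.2
        have htm : t ≤ m₀ := by
          by_contra hc
          push_neg at hc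
          have := htmin m₀ hc
          rw [hm₀] at this
          push_cast at this
          omega
        have hm1 : pre rest (m₀ - t) = -(k:ℤ) := by
          rw [hrpre, show t + (m₀ - t) = m₀ by omega, hm₀]
          push_cast; ring
        have hm1len : m₀ - t ≤ rest.length := by
          by_contra hc
          push_neg at hc
          rw [pre_of_le rest (by omega), hrsum] at hm1
          omega
        have hm1u : m₀ - t ≤ u :=
          Nat.le_findGreatest hm1len (by rw [hm1]; push_cast; omega)
        exact ⟨m₀ - t, by rw [pre_take, min_eq_left hm1u, hm1]⟩
    have hQmot : Mot (rest.drop (u+1)) := by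
      refine ⟨steps_sublist hrsteps (List.drop_sublist _ _), ?_, fun m => ?_⟩
      · rw [sum_drop, hrsum, hkey2.2.2]; ring
      · rw [pre_drop, hkey2.2.2]
        rcases le_or_gt (u+1+m) rest.length with h | h
        · have := hu_max (u+1+m) (by omega) h
          omega
        · rw [pre_of_le rest (by omega), hrsum]
          omega
    refine ⟨⟨⟨l.take (t-1), hPmot⟩, ⟨rest.take u, hTge⟩, ⟨rest.drop (u+1), hQmot⟩⟩,
      Subtype.ext ?_⟩
    show l.take (t-1) ++ (-1:ℤ) :: (rest.take u ++ (1:ℤ) :: rest.drop (u+1)) = l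
    rw [← hsplit2, ← hsplit]

lemma ge_fib_finite (k n : ℕ) : Finite {a : {l : List ℤ // GE k l} // a.1.length = n} :=
  fib_finite (fun l hl => hl.1) n

noncomputable def gfG (k : ℕ) : PowerSeries ℚ := gf {l : List ℤ // GE k l} (fun a => a.1.length)

lemma gfG_def (k : ℕ) : gfG k = gf {l : List ℤ // GE k l} (fun a => a.1.length) := rfl

lemma gfG_zero : gfG 0 = gfM :=
  gf_congr (Equiv.subtypeEquivRight (fun l => ge_zero_iff l)) _ _ (fun a => rfl)

lemma gfG_succ (k : ℕ) : gfG (k+1) = X ^ 2 * (gfM * (gfG k * gfM)) := by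
  have hcongr := gf_congr (Equiv.ofBijective (geΨ k) (geΨ_bij k))
    (fun p => (p.1.1.length + (p.2.1.1.length + p.2.2.1.length)) + 2)
    (fun a => a.1.length)
    (by
      rintro ⟨P, T, Q⟩
      simp [geΨ, Equiv.ofBijective]
      omega)
  conv_lhs => rw [gfG_def, ← hcongr]
  rw [gf_shift (fun p : {l : List ℤ // Mot l} × {l : List ℤ // GE k l} × {l : List ℤ // Mot l} =>
      p.1.1.length + (p.2.1.1.length + p.2.2.1.length)) 2,
    gf_prod _ _ mot_fib_finite (finite_prod_fiber (ge_fib_finite k) mot_fib_finite),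
    gf_prod _ _ (ge_fib_finite k) mot_fib_finite, ← gfM_def, ← gfG_def]

lemma gfG_eq (k : ℕ) : gfG k = X ^ (2 * k) * gfM ^ (2 * k + 1) := by
  induction k with
  | zero => rw [gfG_zero]; simp
  | succ k ih =>
    rw [gfG_succ, ih]
    ring

lemma pre_ofFn {n : ℕ} (s : Fin n → ℤ) (m : ℕ) :
    pre (List.ofFn s) m = ∑ i ∈ Finset.univ.filter (fun i : Fin n => (i:ℕ) < m), s i := by
  induction m with
  | zero => simp
  | succ m ih =>
    rw [pre_succ, ih]
    rcases lt_or_ge m n with h | h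
    · have hget : (List.ofFn s).getD m 0 = s ⟨m, h⟩ := by
        rw [List.getD_eq_getElem _ _ (by simpa using h)]
        simp
      have hins : Finset.univ.filter (fun i : Fin n => (i:ℕ) < m + 1)
          = insert (⟨m, h⟩ : Fin n) (Finset.univ.filter (fun i : Fin n => (i:ℕ) < m)) := by
        ext x
        simp [Fin.ext_iff]
        omega
      rw [hget, hins, Finset.sum_insert (by simp)]
      ring
    · rw [List.getD_eq_default _ _ (by simpa using h), add_zero]
      apply Finset.sum_congr _ (fun x _ => rfl)
      apply Finset.filter_congr
      intro x _
      have := x.isLt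
      constructor <;> intro <;> omega

def toGE (k n : ℕ) (s : {s : Fin n → ℤ //
    (∀ i, s i = -1 ∨ s i = 0 ∨ s i = 1) ∧
    (∑ i, s i) = 0 ∧
    (∀ m : ℕ, -(k : ℤ) ≤ ∑ i ∈ Finset.univ.filter (fun i : Fin n => (i : ℕ) < m), s i) ∧
    (∃ m : ℕ, (∑ i ∈ Finset.univ.filter (fun i : Fin n => (i : ℕ) < m), s i) = -(k : ℤ))}) :
    {a : {l : List ℤ // GE k l} // a.1.length = n} :=
  ⟨⟨List.ofFn s.1,
    fun x hx => by
      rw [List.mem_ofFn] at hx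
      obtain ⟨i, rfl⟩ := hx
      exact s.2.1 i,
    by rw [List.sum_ofFn]; exact s.2.2.1,
    fun m => by rw [pre_ofFn]; exact s.2.2.2.1 m,
    by
      obtain ⟨m, hm⟩ := s.2.2.2.2
      exact ⟨m, by rw [pre_ofFn]; exact hm⟩⟩, by simp⟩

lemma card_eq (k n : ℕ) :
    Nat.card {s : Fin n → ℤ //
        (∀ i, s i = -1 ∨ s i = 0 ∨ s i = 1) ∧
        (∑ i, s i) = 0 ∧
        (∀ m : ℕ, -(k : ℤ) ≤ ∑ i ∈ Finset.univ.filter (fun i : Fin n => (i : ℕ) < m), s i) ∧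
        (∃ m : ℕ, (∑ i ∈ Finset.univ.filter (fun i : Fin n => (i : ℕ) < m), s i) = -(k : ℤ))}
      = Nat.card {a : {l : List ℤ // GE k l} // a.1.length = n} := by
  apply Nat.card_congr
  refine Equiv.ofBijective (toGE k n) ⟨?_, ?_⟩
  · intro x y hxy
    apply Subtype.ext
    apply List.ofFn_injective
    exact congrArg (fun z => z.1.1) hxy
  · rintro ⟨⟨l, hGE⟩, hlen⟩
    dsimp only at hlen
    subst hlen
    refine ⟨⟨fun i => l.get i, fun i => hGE.1 _ (List.get_mem l i), ?_, ?_, ?_⟩, ?_⟩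
    · rw [← List.sum_ofFn, List.ofFn_get]; exact hGE.2.1
    · intro m; rw [← pre_ofFn, List.ofFn_get]; exact hGE.2.2.1 m
    · obtain ⟨m, hm⟩ := hGE.2.2.2
      exact ⟨m, by rw [← pre_ofFn, List.ofFn_get]; exact hm⟩
    · apply Subtype.ext
      apply Subtype.ext
      exact List.ofFn_get l

end GM

/-- The generating function of Grand Motzkin paths whose minimum level is exactly -k
(k ≥ 1) is z^{2k} M(z)^{2k+1}. -/
theorem grand_motzkin_min_level_gf
    (M : PowerSeries ℚ)
    (hM0 : constantCoeff M = 1)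
    (hM : M = 1 + X * M + X ^ 2 * M ^ 2)
    (k : ℕ) (hk : 1 ≤ k) :
    PowerSeries.mk (fun n =>
      (Nat.card {s : Fin n → ℤ //
        (∀ i, s i = -1 ∨ s i = 0 ∨ s i = 1) ∧
        (∑ i, s i) = 0 ∧
        (∀ m : ℕ, -(k : ℤ) ≤ ∑ i ∈ Finset.univ.filter (fun i : Fin n => (i : ℕ) < m), s i) ∧
        (∃ m : ℕ, (∑ i ∈ Finset.univ.filter (fun i : Fin n => (i : ℕ) < m), s i) = -(k : ℤ))}
        : ℚ)) = X ^ (2 * k) * M ^ (2 * k + 1) := by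
  have hMM : GM.gfM = M := GM.sol_unique GM.gfM_eq hM
  have h1 : PowerSeries.mk (fun n =>
      (Nat.card {s : Fin n → ℤ //
        (∀ i, s i = -1 ∨ s i = 0 ∨ s i = 1) ∧
        (∑ i, s i) = 0 ∧
        (∀ m : ℕ, -(k : ℤ) ≤ ∑ i ∈ Finset.univ.filter (fun i : Fin n => (i : ℕ) < m), s i) ∧
        (∃ m : ℕ, (∑ i ∈ Finset.univ.filter (fun i : Fin n => (i : ℕ) < m), s i) = -(k : ℤ))}
        : ℚ)) = GM.gfG k := by
    ext n
    rw [coeff_mk, GM.gfG_def, GM.coeff_gf, GM.card_eq k n]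
  rw [h1, GM.gfG_eq, hMM]
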